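/- arXiv:1505.07203 — 2 statements merged into one kernel-verified Lean document; each statement's English description precedes it below -/
import Mathlib

section
/- Let G = (V,E) be a finite connected graph and H = (P₀,…,P_ℓ) a connected complete hierarchy on V. Then for every λ ∈ {0,…,ℓ}, the λ-level partition of G for the saliency map Φ(H) equals P_λ; equivalently, the connected components of the graph (V, {u ∈ E : Φ(H)(u) < λ}) are exactly the regions of P_λ. -/
open SimpleGraph

variable {V : Type*}

/-- `P'` refines `P`: every region of `P'` is contained in a region of `P`. -/
def Refines (P' P : Set (Set V)) : Prop := ∀ R ∈ P', ∃ S ∈ P, R ⊆ S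

/-- `x` and `y` lie in the same region of `P`. -/
def SameRegion (P : Set (Set V)) (x y : V) : Prop := ∃ R ∈ P, x ∈ R ∧ y ∈ R

/-- The cut of a partition `P` for the graph `G`. -/
def cutOf (G : SimpleGraph V) (P : Set (Set V)) : Set (Sym2 V) :=
  {e | e ∈ G.edgeSet ∧ ∀ x y : V, e = s(x, y) → ¬ SameRegion P x y}

/-- The `lam`-level partition of a subgraph `X`: connected components of the
`lam`-level graph `(V(X), {u ∈ E(X) : w u < lam})`, as a set of regions. -/
def levelPartition {G : SimpleGraph V} (X : G.Subgraph) {α : Type*} [LT α]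
    (w : Sym2 V → α) (lam : α) : Set (Set V) :=
  {S | ∃ x ∈ X.verts,
    S = {y | Relation.ReflTransGen (fun a b => X.Adj a b ∧ w s(a, b) < lam) x y}}

/-- The `lam`-level partition of the graph `G` itself (quasi-flat zones at level `lam`). -/
def qfz (G : SimpleGraph V) (w : Sym2 V → ℕ) (lam : ℕ) : Set (Set V) :=
  {S | ∃ x : V,
    S = {y | Relation.ReflTransGen (fun a b => G.Adj a b ∧ w s(a, b) < lam) x y}}

/-- `(P₀, …, P_l)` is a complete hierarchy on `V`. -/
def IsCompleteHierarchy (P : ℕ → Set (Set V)) (l : ℕ) : Prop :=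
  (∀ i ≤ l, Setoid.IsPartition (P i)) ∧
  (∀ i, 1 ≤ i → i ≤ l → Refines (P (i - 1)) (P i)) ∧
  (P 0 = {S | ∃ x : V, S = {x}}) ∧
  (P l = {Set.univ})

/-- A complete hierarchy all of whose regions induce connected subgraphs of `G`. -/
def IsConnectedHierarchy (G : SimpleGraph V) (P : ℕ → Set (Set V)) (l : ℕ) : Prop :=
  IsCompleteHierarchy P l ∧ ∀ i ≤ l, ∀ S ∈ P i, (G.induce S).Connected

/-- The saliency map of the hierarchy `(P₀, …, P_l)`:
`Φ(H)(u) = max {lam ≤ l : u ∈ φ(P lam)}`. -/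
noncomputable def saliency (G : SimpleGraph V) (P : ℕ → Set (Set V)) (l : ℕ)
    (e : Sym2 V) : ℕ :=
  sSup {lam | lam ≤ l ∧ e ∈ cutOf G (P lam)}

/-- `w` is a saliency map on `G`: the saliency map of some connected complete
hierarchy of depth `|E|`. -/
def IsSaliencyMap (G : SimpleGraph V) [Fintype G.edgeSet] (w : Sym2 V → ℕ) : Prop :=
  ∃ P : ℕ → Set (Set V), IsConnectedHierarchy G P G.edgeFinset.card ∧
    ∀ e ∈ G.edgeSet, w e = saliency G P G.edgeFinset.card e

/-- Total weight of a subgraph. -/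
noncomputable def sgWeight [Fintype V] {G : SimpleGraph V} {α : Type*}
    [AddCommMonoid α] (X : G.Subgraph) (w : Sym2 V → α) : α :=
  ∑ e ∈ (Set.toFinite X.edgeSet).toFinset, w e

/-- `X` is a minimum spanning tree of `(G, w)`. -/
def IsMST [Fintype V] {G : SimpleGraph V} {α : Type*} [AddCommMonoid α] [Preorder α]
    (X : G.Subgraph) (w : Sym2 V → α) : Prop :=
  X.verts = Set.univ ∧ X.Connected ∧
  ∀ Y : G.Subgraph, Y.verts = Set.univ → Y.Connected → sgWeight X w ≤ sgWeight Y w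

lemma refines_chain (P : ℕ → Set (Set V)) (l : ℕ)
    (h : ∀ i, 1 ≤ i → i ≤ l → Refines (P (i - 1)) (P i)) :
    ∀ i j, i ≤ j → j ≤ l → Refines (P i) (P j) := by
  intro i j hij hjl
  induction j with
  | zero =>
    interval_cases i
    intro R hR; exact ⟨R, hR, le_refl _⟩
  | succ n ih =>
    rcases Nat.lt_or_ge i (n+1) with hlt | hge
    · have h1 : Refines (P n) (P (n+1)) := by
        have := h (n+1) (Nat.le_add_left 1 n) hjl
        simpa using this
      have h2 : Refines (P i) (P n) :=
        ih (Nat.lt_succ_iff.mp hlt) (Nat.le_of_succ_le hjl)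
      intro R hR
      obtain ⟨S, hS, hRS⟩ := h2 R hR
      obtain ⟨T, hT, hST⟩ := h1 S hS
      exact ⟨T, hT, hRS.trans hST⟩
    · have : i = n + 1 := le_antisymm hij hge
      subst this
      intro R hR; exact ⟨R, hR, le_refl _⟩

lemma sameRegion_mono {P Q : Set (Set V)} (h : Refines P Q) {x y : V}
    (hxy : SameRegion P x y) : SameRegion Q x y := by
  obtain ⟨R, hR, hx, hy⟩ := hxy
  obtain ⟨S, hS, hRS⟩ := h R hR
  exact ⟨S, hS, hRS hx, hRS hy⟩

/-- Key characterization: for an edge `s(a,b)` of `G` and `lam ≤ l`, the saliency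
is `< lam` iff `a` and `b` lie in the same region of `P lam`. -/
lemma saliency_lt_iff (G : SimpleGraph V) (P : ℕ → Set (Set V)) (l : ℕ)
    (hH : IsCompleteHierarchy P l) {a b : V} (hab : G.Adj a b)
    {lam : ℕ} (hlam : lam ≤ l) :
    saliency G P l s(a, b) < lam ↔ SameRegion (P lam) a b := by
  obtain ⟨hpart, href, h0, hl⟩ := hH
  set S : Set ℕ := {μ | μ ≤ l ∧ s(a, b) ∈ cutOf G (P μ)} with hSdef
  have hbdd : BddAbove S := ⟨l, fun μ hμ => hμ.1⟩
  have h0mem : 0 ∈ S := by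
    refine ⟨Nat.zero_le l, G.mem_edgeSet.mpr hab, ?_⟩
    intro x y hxy hsame
    obtain ⟨R, hR, hx, hy⟩ := hsame
    rw [h0] at hR
    obtain ⟨z, rfl⟩ := hR
    have hxz : x = z := hx
    have hyz : y = z := hy
    have hne : x ≠ y := by
      rw [Sym2.eq_iff] at hxy
      rcases hxy with ⟨rfl, rfl⟩ | ⟨rfl, rfl⟩
      · exact hab.ne
      · exact hab.ne'
    exact hne (hxz.trans hyz.symm)
  have hne : S.Nonempty := ⟨0, h0mem⟩
  constructor
  · intro hlt
    by_contra hnot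
    have hcut : s(a, b) ∈ cutOf G (P lam) := by
      refine ⟨G.mem_edgeSet.mpr hab, ?_⟩
      intro x y hxy hsame
      rw [Sym2.eq_iff] at hxy
      rcases hxy with ⟨rfl, rfl⟩ | ⟨rfl, rfl⟩
      · exact hnot hsame
      · obtain ⟨R, hR, hx, hy⟩ := hsame
        exact hnot ⟨R, hR, hy, hx⟩
    have : lam ∈ S := ⟨hlam, hcut⟩
    exact absurd (le_csSup hbdd this) (not_le.mpr hlt)
  · intro hsame
    have hmem : sSup S ∈ S := Nat.sSup_mem hne hbdd
    by_contra hge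
    push_neg at hge
    -- lam ≤ sSup S, so SameRegion (P (sSup S)) a b, contradicting sSup S ∈ S
    have hchain : Refines (P lam) (P (sSup S)) :=
      refines_chain P l href lam (sSup S) hge hmem.1
    have hsame' : SameRegion (P (sSup S)) a b := sameRegion_mono hchain hsame
    exact hmem.2.2 a b rfl hsame'

/-- for every `lam ≤ l`, the `lam`-level partition of `G` for the
saliency map `Φ(H)` is exactly `P lam`. -/
theorem qfz_of_saliency_eq_hierarchy [Fintype V] (G : SimpleGraph V)
    (hG : G.Connected) (P : ℕ → Set (Set V)) (l : ℕ)
    (hH : IsConnectedHierarchy G P l) :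
    ∀ lam ≤ l, qfz G (saliency G P l) lam = P lam := by
  intro lam hlam
  obtain ⟨hcomp, hconn⟩ := hH
  have hpart : Setoid.IsPartition (P lam) := hcomp.1 lam hlam
  -- the class of x equals the region of x
  have key : ∀ x : V, ∀ R ∈ P lam, x ∈ R →
      {y | Relation.ReflTransGen
        (fun a b => G.Adj a b ∧ saliency G P l s(a, b) < lam) x y} = R := by
    intro x R hR hxR
    apply Set.eq_of_subset_of_subset
    · intro y hy
      induction hy with
      | refl => exact hxR
      | tail _ hstep ih =>
        rename_i b c _
        have hsame : SameRegion (P lam) b c :=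
          (saliency_lt_iff G P l hcomp hstep.1 hlam).mp hstep.2
        obtain ⟨R', hR', hbR', hcR'⟩ := hsame
        obtain ⟨T, ⟨hT, hbT⟩, huniq⟩ := hpart.2 b
        have e1 : R' = T := huniq R' ⟨hR', hbR'⟩
        have e2 : R = T := huniq R ⟨hR, ih⟩
        rw [e2, ← e1]
        exact hcR'
    · intro y hyR
      have hRconn : (G.induce R).Connected := hconn lam hlam R hR
      have hreach : (G.induce R).Reachable ⟨x, hxR⟩ ⟨y, hyR⟩ := hRconn ⟨x, hxR⟩ ⟨y, hyR⟩
      rw [SimpleGraph.reachable_iff_reflTransGen] at hreach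
      have := Relation.ReflTransGen.lift (r := (G.induce R).Adj)
        (p := fun a b => G.Adj a b ∧ saliency G P l s(a, b) < lam)
        (Subtype.val) ?_ _ _ hreach
      · exact this
      · rintro ⟨a, ha⟩ ⟨b, hb⟩ hadj
        have hab : G.Adj a b := by simpa using hadj
        refine ⟨hab, ?_⟩
        exact (saliency_lt_iff G P l hcomp hab hlam).mpr ⟨R, hR, ha, hb⟩
  ext S
  constructor
  · rintro ⟨x, rfl⟩
    obtain ⟨R, ⟨hR, hxR⟩, _⟩ := hpart.2 x
    rw [key x R hR hxR]
    exact hR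
  · intro hS
    have hSne : S.Nonempty := by
      rcases Set.eq_empty_or_nonempty S with rfl | h
      · exact absurd hS hpart.1
      · exact h
    obtain ⟨x, hx⟩ := hSne
    exact ⟨x, (key x S hS hx).symm⟩
end

section
/- Let G = (V,E) be a finite connected graph and w : E → ℕ. Then Ψ(w) = Φ(QFZ(G,w)) is the pointwise largest saliency map that is ≤ w; i.e., Ψ(w) ≤ w, Ψ(w) is a saliency map, and for every saliency map w' with w' ≤ w one has w' ≤ Ψ(w). -/
open SimpleGraph

variable {V : Type*}

section Aux
variable {G : SimpleGraph V} {w : Sym2 V → ℕ}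

private lemma relSymm (lam : ℕ) :
    Symmetric (fun a b => G.Adj a b ∧ w s(a, b) < lam) := by
  rintro a b ⟨h1, h2⟩
  exact ⟨h1.symm, by rwa [Sym2.eq_swap]⟩

private lemma rtgSymm {lam : ℕ} {x y : V}
    (h : Relation.ReflTransGen (fun a b => G.Adj a b ∧ w s(a, b) < lam) x y) :
    Relation.ReflTransGen (fun a b => G.Adj a b ∧ w s(a, b) < lam) y x :=
  (@Relation.ReflTransGen.stdSymm _ _ ⟨relSymm lam⟩).symm _ _ h

private lemma qfz_isPartition (lam : ℕ) : Setoid.IsPartition (qfz G w lam) := by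
  constructor
  · rintro ⟨x, hx⟩
    have hmem : x ∈ {y | Relation.ReflTransGen
        (fun a b => G.Adj a b ∧ w s(a, b) < lam) x y} := Relation.ReflTransGen.refl
    rw [← hx] at hmem
    exact hmem
  · intro a
    refine ⟨{y | Relation.ReflTransGen (fun a' b => G.Adj a' b ∧ w s(a', b) < lam) a y},
      ⟨⟨a, rfl⟩, Relation.ReflTransGen.refl⟩, ?_⟩
    rintro S ⟨⟨z, rfl⟩, haS⟩
    ext y
    simp only [Set.mem_setOf_eq] at *
    exact ⟨fun h => (rtgSymm haS).trans h, fun h => haS.trans h⟩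

private lemma sameRegion_refl {P : Set (Set V)} (hP : Setoid.IsPartition P) (a : V) :
    SameRegion P a a := by
  obtain ⟨S, ⟨hS, haS⟩, -⟩ := hP.2 a
  exact ⟨S, hS, haS, haS⟩

private lemma sameRegion_trans {P : Set (Set V)} (hP : Setoid.IsPartition P) {a b c : V}
    (h1 : SameRegion P a b) (h2 : SameRegion P b c) : SameRegion P a c := by
  obtain ⟨R, hR, haR, hbR⟩ := h1
  obtain ⟨T, hT, hbT, hcT⟩ := h2
  obtain ⟨S, -, huniq⟩ := hP.2 b
  have hRT : R = T := (huniq R ⟨hR, hbR⟩).trans (huniq T ⟨hT, hbT⟩).symm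
  exact ⟨R, hR, haR, hRT ▸ hcT⟩

private lemma sameRegion_symm {P : Set (Set V)} {a b : V}
    (h : SameRegion P a b) : SameRegion P b a := by
  obtain ⟨R, hR, haR, hbR⟩ := h
  exact ⟨R, hR, hbR, haR⟩

end Aux

/-- `Ψ(w)` is the pointwise largest saliency map below `w`. -/
theorem saliency_operator_is_opening [Fintype V] (G : SimpleGraph V)
    [Fintype G.edgeSet] (hG : G.Connected) (w : Sym2 V → ℕ)
    (hw : ∀ e ∈ G.edgeSet, w e < G.edgeFinset.card) :
    (∀ e ∈ G.edgeSet, saliency G (qfz G w) G.edgeFinset.card e ≤ w e) ∧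
    IsSaliencyMap G (saliency G (qfz G w) G.edgeFinset.card) ∧
    (∀ w' : Sym2 V → ℕ, IsSaliencyMap G w' → (∀ e ∈ G.edgeSet, w' e ≤ w e) →
      ∀ e ∈ G.edgeSet, w' e ≤ saliency G (qfz G w) G.edgeFinset.card e) := by
  set l := G.edgeFinset.card with hl
  refine ⟨?_, ?_, ?_⟩
  · -- Part 1 : Ψ(w) ≤ w
    intro e
    induction e using Sym2.ind with
    | _ x y =>
      intro he
      apply csSup_le'
      rintro lam ⟨-, -, hcut⟩
      by_contra h
      push_neg at h
      exact hcut x y rfl ⟨{z | Relation.ReflTransGen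
          (fun a b => G.Adj a b ∧ w s(a, b) < lam) x z}, ⟨x, rfl⟩,
        Relation.ReflTransGen.refl,
        Relation.ReflTransGen.single ⟨(G.mem_edgeSet).mp he, h⟩⟩
  · -- Part 2 : Ψ(w) is a saliency map (witnessed by the QFZ hierarchy itself)
    refine ⟨qfz G w, ⟨⟨fun i _ => qfz_isPartition i, ?_, ?_, ?_⟩, ?_⟩, fun e he => rfl⟩
    · -- refinement
      rintro i - - S ⟨x, rfl⟩
      exact ⟨_, ⟨x, rfl⟩, fun y hy => Relation.ReflTransGen.mono
        (fun a b (h : G.Adj a b ∧ w s(a, b) < i - 1) => (⟨h.1, h.2.trans_le (Nat.sub_le i 1)⟩ :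
          G.Adj a b ∧ w s(a, b) < i)) _ _ hy⟩
    · -- level 0 : singletons
      have h0 : ∀ x : V, {y | Relation.ReflTransGen
          (fun a b => G.Adj a b ∧ w s(a, b) < 0) x y} = ({x} : Set V) := by
        intro x
        ext y
        simp only [Set.mem_setOf_eq, Set.mem_singleton_iff]
        constructor
        · intro h
          induction h with
          | refl => rfl
          | tail _ hstep ih => exact absurd hstep.2 (Nat.not_lt_zero _)
        · rintro rfl
          exact Relation.ReflTransGen.refl
      ext S
      simp only [qfz, Set.mem_setOf_eq]
      constructor
      · rintro ⟨x, rfl⟩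
        exact ⟨x, h0 x⟩
      · rintro ⟨x, rfl⟩
        exact ⟨x, (h0 x).symm⟩
    · -- level l : everything
      have hu : ∀ x : V, {y | Relation.ReflTransGen
          (fun a b => G.Adj a b ∧ w s(a, b) < l) x y} = Set.univ := by
        intro x
        ext y
        simp only [Set.mem_setOf_eq, Set.mem_univ, iff_true]
        exact Relation.ReflTransGen.mono
          (fun a b (h : G.Adj a b) => (⟨h, hw _ ((G.mem_edgeSet).mpr h)⟩ :
            G.Adj a b ∧ w s(a, b) < l)) _ _
          ((SimpleGraph.reachable_iff_reflTransGen x y).mp (hG.preconnected x y))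
      ext S
      simp only [qfz, Set.mem_setOf_eq, Set.mem_singleton_iff]
      constructor
      · rintro ⟨x, rfl⟩
        exact hu x
      · rintro rfl
        obtain ⟨x⟩ := hG.nonempty
        exact ⟨x, (hu x).symm⟩
    · -- regions are connected
      rintro i - S ⟨x, rfl⟩
      have key : ∀ y, Relation.ReflTransGen (fun a b => G.Adj a b ∧ w s(a, b) < i) x y →
          ∀ hy : y ∈ {z | Relation.ReflTransGen (fun a b => G.Adj a b ∧ w s(a, b) < i) x z},
          (G.induce {z | Relation.ReflTransGen (fun a b => G.Adj a b ∧ w s(a, b) < i) x z}).Reachable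
            ⟨x, Relation.ReflTransGen.refl⟩ ⟨y, hy⟩ := by
        intro y hy
        induction hy with
        | refl => exact fun _ => SimpleGraph.Reachable.refl _
        | @tail b c hxb hstep ih =>
          intro hc
          have hb : b ∈ {z | Relation.ReflTransGen
              (fun a b => G.Adj a b ∧ w s(a, b) < i) x z} := hxb
          refine (ih hb).trans (SimpleGraph.Adj.reachable ?_)
          exact hstep.1
      rw [SimpleGraph.connected_iff]
      constructor
      · rintro ⟨a, ha⟩ ⟨b, hb⟩
        exact (key a ha ha).symm.trans (key b hb hb)
      · exact ⟨⟨x, Relation.ReflTransGen.refl⟩⟩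
  · -- Part 3 : maximality
    rintro w' ⟨P, ⟨⟨hpart, -, hP0, -⟩, -⟩, hw'sal⟩ hle e
    induction e using Sym2.ind with
    | _ x y =>
      intro he
      have hxy : G.Adj x y := (G.mem_edgeSet).mp he
      have hne : x ≠ y := hxy.ne
      rw [hw'sal _ he]
      have hbddP : ∀ u : Sym2 V, BddAbove {lam | lam ≤ l ∧ u ∈ cutOf G (P lam)} :=
        fun u => ⟨l, fun lam h => h.1⟩
      have h0mem : 0 ∈ {lam | lam ≤ l ∧ s(x, y) ∈ cutOf G (P lam)} := by
        refine ⟨Nat.zero_le _, he, ?_⟩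
        rintro a b hab ⟨R, hR, haR, hbR⟩
        rw [hP0] at hR
        obtain ⟨z, rfl⟩ := hR
        have ha : a = z := haR
        have hb : b = z := hbR
        rcases Sym2.eq_iff.mp hab with ⟨rfl, rfl⟩ | ⟨rfl, rfl⟩
        · exact hne (ha.trans hb.symm)
        · exact hne (hb.trans ha.symm)
      have hksal := Nat.sSup_mem ⟨0, h0mem⟩ (hbddP s(x, y))
      simp only [saliency]
      set k := sSup {lam | lam ≤ l ∧ s(x, y) ∈ cutOf G (P lam)} with hk
      apply le_csSup ⟨l, fun lam h => h.1⟩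
      refine ⟨hksal.1, he, ?_⟩
      rintro a b hab hsame
      obtain ⟨R, ⟨z, rfl⟩, haR, hbR⟩ := hsame
      have hab' : Relation.ReflTransGen (fun a b => G.Adj a b ∧ w s(a, b) < k) a b :=
        (rtgSymm haR).trans hbR
      have hPk := hpart k hksal.1
      have step : ∀ c d, Relation.ReflTransGen (fun a b => G.Adj a b ∧ w s(a, b) < k) c d →
          SameRegion (P k) c d := by
        intro c d h
        induction h with
        | refl => exact sameRegion_refl hPk _
        | @tail b' c' hcb hstep ih =>
          have hedge : s(b', c') ∈ G.edgeSet := hstep.1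
          have hwlt : w' s(b', c') < k := lt_of_le_of_lt (hle _ hedge) hstep.2
          have hnotcut : s(b', c') ∉ cutOf G (P k) := by
            intro hcut
            have hkle : k ≤ w' s(b', c') := by
              rw [hw'sal _ hedge]
              exact le_csSup (hbddP _) ⟨hksal.1, hcut⟩
            omega
          have hsr : SameRegion (P k) b' c' := by
            by_contra hnot
            apply hnotcut
            refine ⟨hedge, ?_⟩
            rintro a' b'' hab''
            rcases Sym2.eq_iff.mp hab'' with ⟨rfl, rfl⟩ | ⟨rfl, rfl⟩
            · exact fun hs => hnot hs
            · exact fun hs => hnot (sameRegion_symm hs)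
          exact sameRegion_trans hPk ih hsr
      exact hksal.2.2 a b hab (step a b hab')
end
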